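/- Let X be a quasi-median graph and γ a path in X that is not a geodesic. Then γ contains two edges e and f belonging to a common hyperplane J such that the subpath γ₀ of γ between them is a geodesic contained in a single fibre of J; consequently e, γ₀, f span either a ladder (γ₀ together with a parallel copy joined by squares) or a tower configuration inside N(J) ≅ F × C. -/

import Mathlib

open SimpleGraph

universe u

variable {V : Type u}

/-- Two vertices of a product of complete graphs are adjacent when they differ in
exactly one coordinate. -/
def HammingAdj {ι : Type u} {K : ι → Type u} (x y : ∀ i, K i) : Prop :=
  ∃ i, x i ≠ y i ∧ ∀ j, j ≠ i → x j = y j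

/-- A quasi-median graph: a connected graph that is a retract of a Hamming graph
(a product of complete graphs); the retraction is a weak graph homomorphism. -/
def IsQuasiMedianGraph (G : SimpleGraph V) : Prop :=
  G.Connected ∧ ∃ (ι : Type u) (K : ι → Type u) (f : V → ∀ i, K i) (g : (∀ i, K i) → V),
    (∀ v, g (f v) = v) ∧
    (∀ u v, G.Adj u v → HammingAdj (f u) (f v)) ∧
    (∀ x y, HammingAdj x y → g x = g y ∨ G.Adj (g x) (g y))

/-- Generating relation for hyperplanes: two edges belong to a common triangle, or
are opposite sides of an induced 4-cycle. -/
def QMEdgeRel (G : SimpleGraph V) (e f : Sym2 V) : Prop :=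
  e ∈ G.edgeSet ∧ f ∈ G.edgeSet ∧
  ((∃ a b c : V, e = s(a, b) ∧ f = s(a, c) ∧ G.Adj a b ∧ G.Adj a c ∧ G.Adj b c) ∨
   (∃ a b c d : V, e = s(a, b) ∧ f = s(d, c) ∧
     G.Adj a b ∧ G.Adj b c ∧ G.Adj c d ∧ G.Adj d a ∧
     ¬ G.Adj a c ∧ ¬ G.Adj b d ∧ a ≠ c ∧ b ≠ d))

/-- A hyperplane: the equivalence class of an edge under the relation generated by
`QMEdgeRel`. -/
def IsHyperplane (G : SimpleGraph V) (J : Set (Sym2 V)) : Prop :=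
  ∃ e ∈ G.edgeSet, J = {f | Relation.EqvGen (QMEdgeRel G) e f}

/-- The carrier of a hyperplane: vertices incident to an edge of the hyperplane. -/
def hypCarrier (G : SimpleGraph V) (J : Set (Sym2 V)) : Set V :=
  {v | ∃ w : V, G.Adj v w ∧ s(v, w) ∈ J}

section helpers
variable {ι : Type u} {K : ι → Type u}

def diffs (x y : ∀ i, K i) : Set ι := {i | x i ≠ y i}

lemma mem_diffs {x y : ∀ i, K i} {i : ι} : i ∈ diffs x y ↔ x i ≠ y i := Iff.rfl

lemma diffs_comm (x y : ∀ i, K i) : diffs x y = diffs y x :=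
  Set.ext fun _ => ne_comm

lemma hammingAdj_iff {x y : ∀ i, K i} : HammingAdj x y ↔ ∃ i, diffs x y = {i} := by
  constructor
  · rintro ⟨i, hne, hoff⟩
    refine ⟨i, Set.ext fun j => ?_⟩
    simp only [mem_diffs, Set.mem_singleton_iff]
    exact ⟨fun hj => by by_contra h; exact hj (hoff j h), fun hj => by subst hj; exact hne⟩
  · rintro ⟨i, hd⟩
    have hii : i ∈ diffs x y := by rw [hd]; rfl
    refine ⟨i, hii, fun j hj => ?_⟩
    by_contra h
    have hmm : j ∈ diffs x y := h
    rw [hd] at hmm; exact hj hmm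

lemma diffs_subset_union (x y z : ∀ i, K i) : diffs x z ⊆ diffs x y ∪ diffs y z := by
  intro i hi
  by_cases h : x i = y i
  · right; intro h2; exact hi (h.trans h2)
  · left; exact h

lemma diffs_self (x : ∀ i, K i) : diffs x x = ∅ := by ext i; simp [mem_diffs]

lemma not_hammingAdj_of_two {x y : ∀ i, K i} {i j : ι} (hij : i ≠ j)
    (hi : i ∈ diffs x y) (hj : j ∈ diffs x y) : ¬ HammingAdj x y := by
  intro h
  obtain ⟨k, hk⟩ := hammingAdj_iff.mp h
  rw [hk] at hi hj
  exact hij (hi.trans hj.symm)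

lemma of_diffs_singleton {x y : ∀ i, K i} {i : ι} (h : diffs x y = {i}) :
    x i ≠ y i ∧ ∀ j, j ≠ i → x j = y j := by
  constructor
  · have : i ∈ diffs x y := by rw [h]; rfl
    exact this
  · intro j hj
    by_contra hcon
    have hm : j ∈ diffs x y := hcon
    rw [h] at hm; exact hj hm

variable {G : SimpleGraph V} {φ : V → ∀ i, K i} {ψ : (∀ i, K i) → V}

lemma diffs_finite_le (hfH : ∀ u v, G.Adj u v → HammingAdj (φ u) (φ v))
    {u v : V} (p : G.Walk u v) :
    (diffs (φ u) (φ v)).Finite ∧ (diffs (φ u) (φ v)).ncard ≤ p.length := by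
  induction p with
  | nil => rw [diffs_self]; simp
  | @cons a b c h p ih =>
    obtain ⟨i, hi⟩ := hammingAdj_iff.mp (hfH _ _ h)
    have hsub : diffs (φ a) (φ c) ⊆ insert i (diffs (φ b) (φ c)) := by
      intro j hj
      rcases diffs_subset_union (φ a) (φ b) (φ c) hj with hj' | hj'
      · rw [hi] at hj'; exact Or.inl hj'
      · exact Or.inr hj'
    have hfin : (insert i (diffs (φ b) (φ c))).Finite := ih.1.insert i
    refine ⟨hfin.subset hsub, ?_⟩
    have h1 : (diffs (φ a) (φ c)).ncard ≤ (insert i (diffs (φ b) (φ c))).ncard :=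
      Set.ncard_le_ncard hsub hfin
    have h2 : (insert i (diffs (φ b) (φ c))).ncard ≤ (diffs (φ b) (φ c)).ncard + 1 :=
      Set.ncard_insert_le _ _
    have := ih.2
    simp only [Walk.length_cons]
    omega

lemma dist_psi_le (hconn : G.Connected)
    (hHg : ∀ x y, HammingAdj x y → ψ x = ψ y ∨ G.Adj (ψ x) (ψ y)) :
    ∀ n (x y : ∀ i, K i), (diffs x y).Finite → (diffs x y).ncard = n →
      G.dist (ψ x) (ψ y) ≤ n := by
  intro n
  induction n with
  | zero =>
    intro x y hfin h0
    have he : diffs x y = ∅ := (Set.ncard_eq_zero hfin).mp h0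
    have hxy : x = y := by
      funext i
      by_contra h
      have hmm : i ∈ diffs x y := h
      rw [he] at hmm; exact hmm
    subst hxy; simp
  | succ n ih =>
    intro x y hfin hn
    classical
    have hne : (diffs x y).Nonempty := by
      rw [Set.nonempty_iff_ne_empty]
      intro h; rw [h] at hn; simp at hn
    obtain ⟨i, hi⟩ := hne
    set x' := Function.update x i (y i) with hx'
    have hdiff : diffs x' y = diffs x y \ {i} := by
      ext j
      by_cases hji : j = i
      · subst hji; simp [mem_diffs, hx', Function.update_self]
      · simp [mem_diffs, hx', Function.update_of_ne hji, hji]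
    have hadj : HammingAdj x x' := by
      refine ⟨i, ?_, fun j hj => ?_⟩
      · rw [hx', Function.update_self]; exact hi
      · rw [hx', Function.update_of_ne hj]
    have h1 : G.dist (ψ x) (ψ x') ≤ 1 := by
      rcases hHg x x' hadj with h | h
      · rw [h, SimpleGraph.dist_self]; omega
      · have := dist_le (Walk.cons h Walk.nil)
        simpa using this
    have hfin' : (diffs x' y).Finite := by rw [hdiff]; exact hfin.diff
    have hn' : (diffs x' y).ncard = n := by
      rw [hdiff, Set.ncard_diff_singleton_of_mem hi, hn]; rfl
    have h2 := ih x' y hfin' hn'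
    calc G.dist (ψ x) (ψ y) ≤ G.dist (ψ x) (ψ x') + G.dist (ψ x') (ψ y) :=
          hconn.dist_triangle
      _ ≤ 1 + n := by omega
      _ = n + 1 := by omega

lemma dist_eq_ncard (hconn : G.Connected) (hgf : ∀ v, ψ (φ v) = v)
    (hfH : ∀ u v, G.Adj u v → HammingAdj (φ u) (φ v))
    (hHg : ∀ x y, HammingAdj x y → ψ x = ψ y ∨ G.Adj (ψ x) (ψ y)) (u v : V) :
    G.dist u v = (diffs (φ u) (φ v)).ncard := by
  obtain ⟨p, hp⟩ := (hconn u v).exists_walk_length_eq_dist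
  obtain ⟨hfin, hle⟩ := diffs_finite_le hfH p
  have h2 := dist_psi_le hconn hHg _ (φ u) (φ v) hfin rfl
  rw [hgf, hgf] at h2
  omega

/-- diff set of a stretch of a sequence with pairwise distinct coordinates -/
lemma diffs_prefix {x : ℕ → ∀ i, K i} {c : ℕ → ι} {a : ℕ} :
    ∀ b, a ≤ b →
    (∀ k, a ≤ k → k < b → diffs (x k) (x (k + 1)) = {c k}) →
    (∀ k k', a ≤ k → k < k' → k' < b → c k ≠ c k') →
    diffs (x a) (x b) = c '' Set.Ico a b := by
  refine Nat.le_induction ?_ ?_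
  · intro _ _
    rw [diffs_self, Set.Ico_self, Set.image_empty]
  · intro b hab ih hedge hdist
    have hIH := ih (fun k h1 h2 => hedge k h1 (by omega))
      (fun k k' h1 h2 h3 => hdist k k' h1 h2 (by omega))
    have he : diffs (x b) (x (b + 1)) = {c b} := hedge b hab (by omega)
    have hnotin : c b ∉ c '' Set.Ico a b := by
      rintro ⟨k, hk, hke⟩
      exact hdist k b hk.1 hk.2 (by omega) hke
    have hico : Set.Ico a (b + 1) = insert b (Set.Ico a b) := by
      ext k; simp only [Set.mem_Ico, Set.mem_insert_iff]; omega
    rw [hico, Set.image_insert_eq]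
    ext κ
    by_cases hκ : κ = c b
    · subst hκ
      simp only [Set.mem_insert_iff, true_or, iff_true, mem_diffs]
      have h1 : x a (c b) = x b (c b) := by
        by_contra h
        exact hnotin (hIH ▸ h)
      have h2 : x b (c b) ≠ x (b + 1) (c b) := by
        have : c b ∈ diffs (x b) (x (b + 1)) := by rw [he]; rfl
        exact this
      rw [h1]; exact h2
    · have h2 : x b κ = x (b + 1) κ := by
        by_contra h
        have : κ ∈ diffs (x b) (x (b + 1)) := h
        rw [he] at this; exact hκ this
      simp only [Set.mem_insert_iff, hκ, false_or]
      rw [← hIH]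
      constructor
      · intro h; exact fun hh => h (hh.trans h2)
      · intro h; exact fun hh => h (hh.trans h2.symm)

lemma ncard_image_Ico {c : ℕ → ι} {a b : ℕ}
    (hdist : ∀ k k', a ≤ k → k < k' → k' < b → c k ≠ c k') :
    (c '' Set.Ico a b).ncard = b - a := by
  classical
  rw [← Finset.coe_Ico, ← Finset.coe_image, Set.ncard_coe_finset,
    Finset.card_image_of_injOn, Nat.card_Ico]
  intro k hk k' hk' hkk'
  simp only [Finset.coe_Ico, Set.mem_Ico] at hk hk'
  by_contra hne
  rcases lt_trichotomy k k' with h | h | h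
  · exact hdist k k' hk.1 h hk'.2 hkk'
  · exact hne h
  · exact hdist k' k hk'.1 h hk.2 hkk'.symm

end helpers

lemma qmEdgeRel_symm {G : SimpleGraph V} {e f : Sym2 V} (h : QMEdgeRel G e f) :
    QMEdgeRel G f e := by
  obtain ⟨he, hf, htri | hsq⟩ := h
  · obtain ⟨a, b, c, rfl, rfl, hab, hac, hbc⟩ := htri
    exact ⟨hf, he, Or.inl ⟨a, c, b, rfl, rfl, hac, hab, hbc.symm⟩⟩
  · obtain ⟨a, b, c, d, rfl, rfl, hab, hbc, hcd, hda, hnac, hnbd, hac, hbd⟩ := hsq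
    refine ⟨hf, he, Or.inr ⟨d, c, b, a, rfl, rfl, hcd.symm, hbc.symm, hab.symm, hda.symm,
      ?_, ?_, hbd.symm, hac.symm⟩⟩
    · intro h; exact hnbd (h.symm)
    · intro h; exact hnac (h.symm)

lemma eqvGen_iff {α : Type*} {r : α → α → Prop} {P : α → Prop}
    (h : ∀ a b, r a b → (P a ↔ P b)) {a b : α} (hab : Relation.EqvGen r a b) :
    P a ↔ P b := by
  induction hab with
  | rel x y h' => exact h x y h'
  | refl => exact Iff.rfl
  | symm x y _ ih => exact ih.symm
  | trans x y z _ _ ih1 ih2 => exact ih1.trans ih2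

section coordinv
variable {ι : Type u} {K : ι → Type u}
variable {G : SimpleGraph V} {φ : V → ∀ i, K i} {ψ : (∀ i, K i) → V}

/-- the coordinate predicate is carried across Sym2 equality -/
lemma coordP_of_sym2_eq {ι₀ : ι} {a b p q : V}
    (h : diffs (φ a) (φ b) = {ι₀}) (he : s(a, b) = s(p, q)) :
    diffs (φ p) (φ q) = {ι₀} := by
  rw [Sym2.eq_iff] at he
  rcases he with ⟨rfl, rfl⟩ | ⟨rfl, rfl⟩
  · exact h
  · rw [diffs_comm]; exact h

lemma qmEdgeRel_coord (hgf : ∀ v, ψ (φ v) = v)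
    (hfH : ∀ u v, G.Adj u v → HammingAdj (φ u) (φ v))
    (hHg : ∀ x y, HammingAdj x y → ψ x = ψ y ∨ G.Adj (ψ x) (ψ y))
    {ι₀ : ι} {e f : Sym2 V} (h : QMEdgeRel G e f)
    (hP : ∀ p q : V, e = s(p, q) → diffs (φ p) (φ q) = {ι₀}) :
    ∀ p q : V, f = s(p, q) → diffs (φ p) (φ q) = {ι₀} := by
  obtain ⟨he, hf, htri | hsq⟩ := h
  · -- triangle
    obtain ⟨a, b, c, rfl, rfl, hab, hac, hbc⟩ := htri
    intro p q hpq
    refine coordP_of_sym2_eq (φ := φ) ?_ hpq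
    have h1 : diffs (φ a) (φ b) = {ι₀} := hP a b rfl
    obtain ⟨i', hi'⟩ := hammingAdj_iff.mp (hfH _ _ hac)
    obtain ⟨i'', hi''⟩ := hammingAdj_iff.mp (hfH _ _ hbc)
    by_cases hii : i' = ι₀
    · rw [hii] at hi'; exact hi'
    · exfalso
      have hb0 : φ a ι₀ ≠ φ b ι₀ := by
        have : ι₀ ∈ diffs (φ a) (φ b) := by rw [h1]; rfl
        exact this
      have hc0 : φ a ι₀ = φ c ι₀ := by
        by_contra hcon
        have : ι₀ ∈ diffs (φ a) (φ c) := hcon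
        rw [hi'] at this
        exact hii this.symm
      have hm1 : ι₀ ∈ diffs (φ b) (φ c) := by
        intro hcon
        exact hb0 (hc0 ▸ hcon ▸ rfl)
      have hb1 : φ a i' = φ b i' := by
        by_contra hcon
        have : i' ∈ diffs (φ a) (φ b) := hcon
        rw [h1] at this
        exact hii this
      have hc1 : φ a i' ≠ φ c i' := by
        have : i' ∈ diffs (φ a) (φ c) := by rw [hi']; rfl
        exact this
      have hm2 : i' ∈ diffs (φ b) (φ c) := by
        intro hcon
        exact hc1 (hb1.trans hcon)
      rw [hi''] at hm1 hm2
      exact hii (hm2.trans hm1.symm)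
  · -- square
    obtain ⟨a, b, c, d, rfl, rfl, hab, hbc, hcd, hda, hnac, hnbd, hac, hbd⟩ := hsq
    intro p q hpq
    refine coordP_of_sym2_eq (φ := φ) ?_ hpq
    have h1 : diffs (φ a) (φ b) = {ι₀} := hP a b rfl
    obtain ⟨k, hk⟩ := hammingAdj_iff.mp (hfH _ _ hbc)
    obtain ⟨i', hi'⟩ := hammingAdj_iff.mp (hfH _ _ hcd)
    obtain ⟨k', hk'⟩ := hammingAdj_iff.mp (hfH _ _ hda)
    -- k ≠ ι₀
    have hkι : k ≠ ι₀ := by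
      rintro rfl
      have hsub : diffs (φ a) (φ c) ⊆ {k} := by
        intro κ hκ
        rcases diffs_subset_union (φ a) (φ b) (φ c) hκ with h' | h'
        · rw [h1] at h'; exact h'
        · rw [hk] at h'; exact h'
      rcases Set.eq_empty_or_nonempty (diffs (φ a) (φ c)) with hemp | hne
      · have : φ a = φ c := by
          funext κ; by_contra hcon
          have : κ ∈ diffs (φ a) (φ c) := hcon
          rw [hemp] at this; exact this
        have : a = c := by rw [← hgf a, ← hgf c, this]
        exact hac this
      · have hsing : diffs (φ a) (φ c) = {k} := (hne.subset_singleton_iff).mp hsub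
        have hha : HammingAdj (φ a) (φ c) := hammingAdj_iff.mpr ⟨k, hsing⟩
        rcases hHg _ _ hha with h' | h'
        · rw [hgf, hgf] at h'; exact hac h'
        · rw [hgf, hgf] at h'; exact hnac h'
    -- diffs (φ a) (φ c) = {ι₀, k}
    have hb0 : φ a ι₀ ≠ φ b ι₀ := by
      have : ι₀ ∈ diffs (φ a) (φ b) := by rw [h1]; rfl
      exact this
    have hbck : φ b k ≠ φ c k := by
      have : k ∈ diffs (φ b) (φ c) := by rw [hk]; rfl
      exact this
    have hoffb : ∀ κ, κ ≠ ι₀ → φ a κ = φ b κ := by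
      intro κ hκ
      by_contra hcon
      have : κ ∈ diffs (φ a) (φ b) := hcon
      rw [h1] at this; exact hκ this
    have hoffc : ∀ κ, κ ≠ k → φ b κ = φ c κ := by
      intro κ hκ
      by_contra hcon
      have : κ ∈ diffs (φ b) (φ c) := hcon
      rw [hk] at this; exact hκ this
    have hacd : diffs (φ a) (φ c) = {ι₀, k} := by
      ext κ
      simp only [Set.mem_insert_iff, Set.mem_singleton_iff, mem_diffs]
      constructor
      · intro hκ
        by_contra hcon
        push_neg at hcon
        exact hκ ((hoffb κ hcon.1).trans (hoffc κ hcon.2))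
      · rintro (hc | hc) <;> rw [hc]
        · exact fun hcon => hb0 (hcon.trans (hoffc ι₀ (Ne.symm hkι)).symm)
        · exact fun hcon => hbck ((hoffb k hkι).symm.trans hcon)
    -- cover by the other two edges
    have hcover : ∀ κ, κ ∈ diffs (φ a) (φ c) → κ = k' ∨ κ = i' := by
      intro κ hκ
      have h' := diffs_subset_union (φ a) (φ d) (φ c) hκ
      rcases h' with h' | h'
      · left
        have : κ ∈ diffs (φ d) (φ a) := by rw [diffs_comm] at h'; exact h'
        rw [hk'] at this; exact this
      · right
        have : κ ∈ diffs (φ c) (φ d) := by rw [diffs_comm] at h'; exact h'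
        rw [hi'] at this; exact this
    have hι₀m : ι₀ ∈ diffs (φ a) (φ c) := by rw [hacd]; exact Or.inl rfl
    have hkm : k ∈ diffs (φ a) (φ c) := by rw [hacd]; exact Or.inr rfl
    rcases hcover ι₀ hι₀m with hc1 | hc1
    · -- ι₀ = k' : bad case, derive φ d = φ b
      exfalso
      rcases hcover k hkm with hc2 | hc2
      · exact hkι (hc2.trans hc1.symm)
      · -- k = i'
        have hdb : φ d = φ b := by
          funext κ
          by_cases hκ : κ = ι₀
          · rw [hκ]
            have e1 : φ c ι₀ = φ d ι₀ := by
              by_contra hcon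
              have : ι₀ ∈ diffs (φ c) (φ d) := hcon
              rw [hi', ← hc2] at this
              exact hkι this.symm
            have e2 : φ b ι₀ = φ c ι₀ := hoffc ι₀ (Ne.symm hkι)
            rw [← e1, ← e2]
          · have e1 : φ d κ = φ a κ := by
              by_contra hcon
              have : κ ∈ diffs (φ d) (φ a) := hcon
              rw [hk', ← hc1] at this
              exact hκ this
            rw [e1, hoffb κ hκ]
        have : d = b := by rw [← hgf d, ← hgf b, hdb]
        exact hbd this.symm
    · -- ι₀ = i' : conclude
      rw [diffs_comm, hi', ← hc1]

end coordinv

/-- a non-geodesic path in a quasi-median graph contains two edges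
dual to a common hyperplane J such that the subpath between them is a geodesic
contained in a single fibre of J (it stays in the carrier and crosses no edge
of J). -/
theorem stmt_14 (G : SimpleGraph V) (hqm : IsQuasiMedianGraph G)
    {u v : V} (γ : G.Walk u v) (hng : G.dist u v < γ.length) :
    ∃ (i j : ℕ) (J : Set (Sym2 V)), i + 1 ≤ j ∧ j + 1 ≤ γ.length ∧
      IsHyperplane G J ∧
      s(γ.getVert i, γ.getVert (i + 1)) ∈ J ∧
      s(γ.getVert j, γ.getVert (j + 1)) ∈ J ∧
      G.dist (γ.getVert (i + 1)) (γ.getVert j) = j - (i + 1) ∧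
      (∀ k, i + 1 ≤ k → k ≤ j → γ.getVert k ∈ hypCarrier G J) ∧
      (∀ k, i + 1 ≤ k → k < j → s(γ.getVert k, γ.getVert (k + 1)) ∉ J) := by
  classical
  obtain ⟨hconn, ι', K, φ, ψ, hgf, hfH, hHg⟩ := hqm
  set L := γ.length with hLdef
  set g : ℕ → V := fun k => γ.getVert k with hgdef
  have hL : 1 ≤ L := by omega
  have hadj : ∀ k, k < L → G.Adj (g k) (g (k + 1)) := fun k hk => γ.adj_getVert_succ hk
  have hdisteq : ∀ a b : V, G.dist a b = (diffs (φ a) (φ b)).ncard :=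
    dist_eq_ncard hconn hgf hfH hHg
  have hfinall : ∀ a b : V, (diffs (φ a) (φ b)).Finite :=
    fun a b => (hconn a b).elim fun p => (diffs_finite_le hfH p).1
  have hcoordex : ∀ k : ℕ, ∃ i : ι', k < L → diffs (φ (g k)) (φ (g (k + 1))) = {i} := by
    intro k
    by_cases hk : k < L
    · obtain ⟨i, hi⟩ := hammingAdj_iff.mp (hfH _ _ (hadj k hk))
      exact ⟨i, fun _ => hi⟩
    · obtain ⟨i, _⟩ := hammingAdj_iff.mp (hfH _ _ (hadj 0 (by omega)))
      exact ⟨i, fun h => absurd h hk⟩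
  choose c hc using hcoordex
  have hrep : ∃ d, ∃ k k', k < k' ∧ k' < L ∧ k' = k + d ∧ c k = c k' := by
    by_contra hno
    push_neg at hno
    have hdis : ∀ k k', k < k' → k' < L → c k ≠ c k' := by
      intro k k' h1 h2
      exact hno (k' - k) k k' h1 h2 (by omega)
    have hpre := diffs_prefix (x := fun k => φ (g k)) (c := c) (a := 0) L (by omega)
      (fun k _ hk => hc k hk) (fun k k' _ h2 h3 => hdis k k' h2 h3)
    have hcard := ncard_image_Ico (c := c) (a := 0) (b := L)
      (fun k k' _ h2 h3 => hdis k k' h2 h3)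
    have hd0 : G.dist (g 0) (g L) = L := by
      rw [hdisteq, hpre, hcard]; omega
    have hg0 : g 0 = u := γ.getVert_zero
    have hgL : g L = v := γ.getVert_length
    rw [hg0, hgL] at hd0
    omega
  obtain ⟨i, j, hij, hjL, hijd, hcc⟩ := Nat.find_spec hrep
  have hmin : ∀ d, d < Nat.find hrep → ¬ ∃ k k', k < k' ∧ k' < L ∧ k' = k + d ∧ c k = c k' :=
    fun d hd => Nat.find_min hrep hd
  have hdistinct : ∀ k k', i ≤ k → k < k' → k' ≤ j → (k ≠ i ∨ k' ≠ j) → c k ≠ c k' := by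
    intro k k' h1 h2 h3 h4 hceq
    have hlt : k' - k < Nat.find hrep := by rcases h4 with h | h <;> omega
    exact hmin _ hlt ⟨k, k', h2, by omega, by omega, hceq⟩
  set ι₀ := c i with hι₀
  have hcj : c j = ι₀ := hcc.symm
  set α := φ (g i) ι₀ with hα
  have hci : diffs (φ (g i)) (φ (g (i + 1))) = {ι₀} := hc i (by omega)
  have hcj1 : diffs (φ (g j)) (φ (g (j + 1))) = {ι₀} := by
    rw [hc j (by omega), hcj]
  have hpre : ∀ a b, i ≤ a → a ≤ b → b ≤ j →
      diffs (φ (g a)) (φ (g b)) = c '' Set.Ico a b := by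
    intro a b h1 h2 h3
    exact diffs_prefix b h2 (fun k hk1 hk2 => hc k (by omega))
      (fun k k' hk1 hk2 hk3 =>
        hdistinct k k' (by omega) hk2 (by omega) (Or.inr (by omega)))
  have hcaw : ∀ a b, i ≤ a → b ≤ j → (c '' Set.Ico a b).ncard = b - a := by
    intro a b h1 h3
    exact ncard_image_Ico (fun k k' hk1 hk2 hk3 =>
      hdistinct k k' (by omega) hk2 (by omega) (Or.inr (by omega)))
  have hdg : ∀ a b, i ≤ a → a ≤ b → b ≤ j → G.dist (g a) (g b) = b - a := by
    intro a b h1 h2 h3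
    rw [hdisteq, hpre a b h1 h2 h3, hcaw a b h1 h3]
  have hnotimg : ∀ b, b ≤ j → ι₀ ∉ c '' Set.Ico (i + 1) b := by
    rintro b hb ⟨k, hk, hke⟩
    simp only [Set.mem_Ico] at hk
    exact hdistinct i k (le_refl i) (by omega) (by omega) (Or.inr (by omega))
      (by rw [← hι₀]; exact hke.symm)
  have hsplit : ∀ b, i < b → c '' Set.Ico i b = insert ι₀ (c '' Set.Ico (i + 1) b) := by
    intro b h1
    have hins : Set.Ico i b = insert i (Set.Ico (i + 1) b) := by
      ext x; simp only [Set.mem_Ico, Set.mem_insert_iff]; omega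
    rw [hins, Set.image_insert_eq, ← hι₀]
  have hβ : ∀ b, i + 1 ≤ b → b ≤ j → φ (g b) ι₀ ≠ α := by
    intro b h1 h2 hcon
    have hm : ι₀ ∈ c '' Set.Ico i b := ⟨i, by simp only [Set.mem_Ico]; omega, hι₀.symm⟩
    rw [← hpre i b (le_refl i) (by omega) h2] at hm
    exact hm (hα.symm.trans hcon.symm)
  have hdiffζ : ∀ b, i + 1 ≤ b → b ≤ j →
      diffs (φ (g i)) (Function.update (φ (g b)) ι₀ α) = c '' Set.Ico (i + 1) b := by
    intro b h1 h2
    ext κ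
    by_cases hκ : κ = ι₀
    · rw [hκ]
      constructor
      · intro hm
        exact absurd (by rw [Function.update_self]) hm
      · intro hm
        exact absurd hm (hnotimg b h2)
    · have hup : Function.update (φ (g b)) ι₀ α κ = φ (g b) κ := Function.update_of_ne hκ _ _
      have lhs : (κ ∈ diffs (φ (g i)) (Function.update (φ (g b)) ι₀ α)) ↔
          κ ∈ diffs (φ (g i)) (φ (g b)) := by
        simp only [mem_diffs, hup]
      rw [lhs, hpre i b (le_refl i) (by omega) h2, hsplit b (by omega)]
      simp only [Set.mem_insert_iff, hκ, false_or]
  have hdistub : ∀ b, i + 1 ≤ b → b ≤ j →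
      G.dist (g i) (ψ (Function.update (φ (g b)) ι₀ α)) ≤ b - (i + 1) := by
    intro b h1 h2
    have hfin : (diffs (φ (g i)) (Function.update (φ (g b)) ι₀ α)).Finite := by
      rw [hdiffζ b h1 h2]; exact (Set.finite_Ico _ _).image _
    have hn : (diffs (φ (g i)) (Function.update (φ (g b)) ι₀ α)).ncard = b - (i + 1) := by
      rw [hdiffζ b h1 h2]; exact hcaw (i + 1) b (by omega) h2
    have hdle := dist_psi_le hconn hHg _ (φ (g i)) _ hfin hn
    rwa [hgf] at hdle
  -- the hyperplane
  set Ej : Sym2 V := s(g j, g (j + 1)) with hEj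
  set J : Set (Sym2 V) := {f | Relation.EqvGen (QMEdgeRel G) Ej f} with hJ
  obtain ⟨hne0, hoff0⟩ := of_diffs_singleton hcj1
  -- base case of the downward induction
  have hbase : ∃ z, G.Adj (g j) z ∧ s(g j, z) ∈ J ∧
      φ z = Function.update (φ (g j)) ι₀ α := by
    by_cases hδ : φ (g (j + 1)) ι₀ = α
    · refine ⟨g (j + 1), hadj j (by omega), Relation.EqvGen.refl _, ?_⟩
      funext κ
      by_cases hκ : κ = ι₀
      · rw [hκ, Function.update_self, hδ]
      · rw [Function.update_of_ne hκ]
        exact (hoff0 κ hκ).symm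
    · have hβj : φ (g j) ι₀ ≠ α := hβ j (by omega) (le_refl j)
      have hd1 : diffs (Function.update (φ (g j)) ι₀ α) (φ (g j)) = {ι₀} := by
        ext κ
        by_cases hκ : κ = ι₀
        · rw [hκ]
          simp only [mem_diffs, Function.update_self, Set.mem_singleton_iff]
          exact ⟨fun _ => trivial, fun _ => Ne.symm hβj⟩
        · simp only [mem_diffs, Function.update_of_ne hκ, Set.mem_singleton_iff, hκ,
            iff_false, ne_eq, not_not]
      have hd2 : diffs (Function.update (φ (g j)) ι₀ α) (φ (g (j + 1))) = {ι₀} := by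
        ext κ
        by_cases hκ : κ = ι₀
        · rw [hκ]
          simp only [mem_diffs, Function.update_self, Set.mem_singleton_iff]
          exact ⟨fun _ => trivial, fun _ => Ne.symm hδ⟩
        · simp only [mem_diffs, Function.update_of_ne hκ, Set.mem_singleton_iff, hκ,
            iff_false, ne_eq, not_not]
          exact hoff0 κ hκ
      have hdz : G.dist (g i) (ψ (Function.update (φ (g j)) ι₀ α)) ≤ j - (i + 1) :=
        hdistub j (by omega) (le_refl j)
      have hzj : ψ (Function.update (φ (g j)) ι₀ α) ≠ g j := by
        intro hcon
        have hdd := hdg i j (le_refl i) (by omega) (le_refl j)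
        rw [← hcon] at hdd
        omega
      have hdj1 : G.dist (g i) (g (j + 1)) = j - i := by
        have hset : diffs (φ (g i)) (φ (g (j + 1))) = insert ι₀ (c '' Set.Ico (i + 1) j) := by
          ext κ
          by_cases hκ : κ = ι₀
          · rw [hκ]
            simp only [mem_diffs, Set.mem_insert_iff, true_or, iff_true]
            intro hcon
            exact hδ (hcon.symm.trans hα.symm)
          · have e1 : φ (g j) κ = φ (g (j + 1)) κ := hoff0 κ hκ
            have e2 : (κ ∈ diffs (φ (g i)) (φ (g (j + 1)))) ↔
                κ ∈ diffs (φ (g i)) (φ (g j)) := by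
              simp only [mem_diffs, ← e1]
            rw [e2, hpre i j (le_refl i) (by omega) (le_refl j), hsplit j (by omega)]
        rw [hdisteq, hset, Set.ncard_insert_of_notMem (hnotimg j (le_refl j))
          ((Set.finite_Ico _ _).image _), hcaw (i + 1) j (by omega) (le_refl j)]
        omega
      have hzj1 : ψ (Function.update (φ (g j)) ι₀ α) ≠ g (j + 1) := by
        intro hcon
        rw [← hcon] at hdj1
        omega
      have ha1 : G.Adj (g j) (ψ (Function.update (φ (g j)) ι₀ α)) := by
        rcases hHg _ (φ (g j)) (hammingAdj_iff.mpr ⟨ι₀, hd1⟩) with h | h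
        · rw [hgf] at h; exact absurd h hzj
        · rw [hgf] at h; exact h.symm
      have ha2 : G.Adj (g (j + 1)) (ψ (Function.update (φ (g j)) ι₀ α)) := by
        rcases hHg _ (φ (g (j + 1))) (hammingAdj_iff.mpr ⟨ι₀, hd2⟩) with h | h
        · rw [hgf] at h; exact absurd h hzj1
        · rw [hgf] at h; exact h.symm
      set z := ψ (Function.update (φ (g j)) ι₀ α) with hzdef
      have hrel : QMEdgeRel G Ej (s(g j, z)) :=
        ⟨(SimpleGraph.mem_edgeSet G).mpr (hadj j (by omega)), (SimpleGraph.mem_edgeSet G).mpr ha1,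
          Or.inl ⟨g j, g (j + 1), z, rfl, rfl, hadj j (by omega), ha1, ha2⟩⟩
      obtain ⟨κ, hκ⟩ := hammingAdj_iff.mp (hfH _ _ ha1)
      obtain ⟨κ', hκ'⟩ := hammingAdj_iff.mp (hfH _ _ ha2)
      obtain ⟨hκne, hκoff⟩ := of_diffs_singleton hκ
      obtain ⟨hκne', hκoff'⟩ := of_diffs_singleton hκ'
      have hκι : κ = ι₀ := by
        by_contra hcon
        have hm : κ ∈ diffs (φ (g (j + 1))) (φ z) := by
          intro heq
          exact hκne ((hoff0 κ hcon).trans heq)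
        rw [hκ'] at hm
        have e1 : φ (g j) ι₀ = φ z ι₀ := hκoff ι₀ fun h => hcon h.symm
        have e2 : φ (g (j + 1)) ι₀ = φ z ι₀ := hκoff' ι₀ fun h => hcon (hm.trans h.symm)
        exact hne0 (e1.trans e2.symm)
      rw [hκι] at hκ hκoff hκne
      have hzι : φ z ι₀ = α := by
        by_contra hcon
        have hsub : c '' Set.Ico i j ⊆ diffs (φ (g i)) (φ z) := by
          intro κ'' hm
          by_cases hκ'' : κ'' = ι₀
          · rw [hκ'']
            intro heq
            exact hcon (heq.symm.trans hα.symm)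
          · have e1 : φ (g j) κ'' = φ z κ'' := hκoff κ'' hκ''
            have e2 : κ'' ∈ diffs (φ (g i)) (φ (g j)) := by
              rw [hpre i j (le_refl i) (by omega) (le_refl j)]; exact hm
            intro heq
            exact e2 (heq.trans e1.symm)
        have h1 : (c '' Set.Ico i j).ncard ≤ (diffs (φ (g i)) (φ z)).ncard :=
          Set.ncard_le_ncard hsub (hfinall _ _)
        have h2 : (c '' Set.Ico i j).ncard = j - i := hcaw i j (le_refl i) (le_refl j)
        have h3 := hdisteq (g i) z
        omega
      refine ⟨z, ha1, Relation.EqvGen.rel _ _ hrel, ?_⟩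
      funext κ''
      by_cases hκ'' : κ'' = ι₀
      · rw [hκ'', Function.update_self]; exact hzι
      · rw [Function.update_of_ne hκ'']
        exact (hκoff κ'' hκ'').symm
  -- the downward step
  have hstep : ∀ b, i + 1 ≤ b → b < j →
      (∃ z, G.Adj (g (b + 1)) z ∧ s(g (b + 1), z) ∈ J ∧
        φ z = Function.update (φ (g (b + 1))) ι₀ α) →
      (∃ z, G.Adj (g b) z ∧ s(g b, z) ∈ J ∧
        φ z = Function.update (φ (g b)) ι₀ α) := by
    rintro b hb1 hbj ⟨z1, hz1adj, hz1J, hz1φ⟩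
    have hcb : diffs (φ (g b)) (φ (g (b + 1))) = {c b} := hc b (by omega)
    obtain ⟨hcbne, hcboff⟩ := of_diffs_singleton hcb
    have hcbι : c b ≠ ι₀ := by
      intro hcon
      exact hdistinct i b (le_refl i) (by omega) (by omega) (Or.inr (by omega))
        (by rw [← hι₀]; exact hcon.symm)
    have hβb : φ (g b) ι₀ ≠ α := hβ b hb1 (by omega)
    have hβb1 : φ (g (b + 1)) ι₀ ≠ α := hβ (b + 1) (by omega) (by omega)
    have hz1ι : φ z1 ι₀ = α := by rw [hz1φ, Function.update_self]
    have hz1off : ∀ κ, κ ≠ ι₀ → φ z1 κ = φ (g (b + 1)) κ := by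
      intro κ hκ; rw [hz1φ, Function.update_of_ne hκ]
    have hdbz1 : diffs (φ (g b)) (φ z1) = {ι₀, c b} := by
      ext κ
      simp only [Set.mem_insert_iff, Set.mem_singleton_iff, mem_diffs]
      by_cases hκ : κ = ι₀
      · rw [hκ, hz1ι]
        exact ⟨fun _ => Or.inl rfl, fun _ => hβb⟩
      · rw [hz1off κ hκ]
        by_cases hκ2 : κ = c b
        · rw [hκ2]
          exact ⟨fun _ => Or.inr rfl, fun _ => hcbne⟩
        · simp only [hκ, hκ2, or_self, iff_false, ne_eq, not_not]
          exact hcboff κ hκ2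
    have hd1 : diffs (Function.update (φ (g b)) ι₀ α) (φ (g b)) = {ι₀} := by
      ext κ
      by_cases hκ : κ = ι₀
      · rw [hκ]
        simp only [mem_diffs, Function.update_self, Set.mem_singleton_iff]
        exact ⟨fun _ => trivial, fun _ => Ne.symm hβb⟩
      · simp only [mem_diffs, Function.update_of_ne hκ, Set.mem_singleton_iff, hκ,
          iff_false, ne_eq, not_not]
    have hd2 : diffs (Function.update (φ (g b)) ι₀ α) (φ z1) = {c b} := by
      ext κ
      by_cases hκ : κ = ι₀
      · rw [hκ]
        simp only [mem_diffs, Function.update_self, Set.mem_singleton_iff, hz1ι]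
        simp only [ne_eq, not_true_eq_false, false_iff]
        exact Ne.symm hcbι
      · have hup : Function.update (φ (g b)) ι₀ α κ = φ (g b) κ := Function.update_of_ne hκ _ _
        simp only [mem_diffs, Set.mem_singleton_iff, hup, hz1off κ hκ]
        constructor
        · intro h
          by_contra hκ2
          exact h (hcboff κ hκ2)
        · intro h
          rw [h]
          exact hcbne
    have hdz' : G.dist (g i) (ψ (Function.update (φ (g b)) ι₀ α)) ≤ b - (i + 1) :=
      hdistub b hb1 (by omega)
    have hdz1 : G.dist (g i) z1 = b + 1 - (i + 1) := by
      rw [hdisteq, hz1φ, hdiffζ (b + 1) (by omega) (by omega),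
        hcaw (i + 1) (b + 1) (by omega) (by omega)]
    have hne1 : ψ (Function.update (φ (g b)) ι₀ α) ≠ g b := by
      intro hcon
      have hdd := hdg i b (le_refl i) (by omega) (by omega)
      rw [← hcon] at hdd
      omega
    have hne2 : ψ (Function.update (φ (g b)) ι₀ α) ≠ z1 := by
      intro hcon
      rw [← hcon] at hdz1
      omega
    have haz' : G.Adj (g b) (ψ (Function.update (φ (g b)) ι₀ α)) := by
      rcases hHg _ (φ (g b)) (hammingAdj_iff.mpr ⟨ι₀, hd1⟩) with h | h
      · rw [hgf] at h; exact absurd h hne1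
      · rw [hgf] at h; exact h.symm
    have hbz' : G.Adj z1 (ψ (Function.update (φ (g b)) ι₀ α)) := by
      rcases hHg _ (φ z1) (hammingAdj_iff.mpr ⟨c b, hd2⟩) with h | h
      · rw [hgf] at h; exact absurd h hne2
      · rw [hgf] at h; exact h.symm
    set z' := ψ (Function.update (φ (g b)) ι₀ α) with hz'def
    obtain ⟨κ, hκ⟩ := hammingAdj_iff.mp (hfH _ _ haz')
    obtain ⟨κ', hκ'⟩ := hammingAdj_iff.mp (hfH _ _ hbz')
    obtain ⟨hκne, hκoff⟩ := of_diffs_singleton hκ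
    obtain ⟨hκne', hκoff'⟩ := of_diffs_singleton hκ'
    have hcov : ∀ x, x ∈ diffs (φ (g b)) (φ z1) → x = κ ∨ x = κ' := by
      intro x hx
      rcases diffs_subset_union (φ (g b)) (φ z') (φ z1) hx with h | h
      · left; rw [hκ] at h; exact h
      · right
        rw [diffs_comm, hκ'] at h
        exact h
    have hι₀κ : ι₀ = κ ∨ ι₀ = κ' := hcov ι₀ (by rw [hdbz1]; exact Or.inl rfl)
    have hcbκ : c b = κ ∨ c b = κ' := hcov (c b) (by rw [hdbz1]; exact Or.inr rfl)
    have hκι : κ = ι₀ := by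
      by_contra hcon
      have h1 : ι₀ = κ' := by
        rcases hι₀κ with h | h
        · exact absurd h.symm hcon
        · exact h
      have h2 : c b = κ := by
        rcases hcbκ with h | h
        · exact h
        · exact absurd (h.trans h1.symm) hcbι
      have hzeq : φ z' = φ (g (b + 1)) := by
        funext x
        by_cases hx1 : x = ι₀
        · rw [hx1]
          have e1 : φ (g b) ι₀ = φ z' ι₀ := hκoff ι₀ fun h => hcon h.symm
          have e2 : φ (g b) ι₀ = φ (g (b + 1)) ι₀ := hcboff ι₀ (Ne.symm hcbι)
          rw [← e1, e2]
        · by_cases hx2 : x = c b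
          · rw [hx2]
            have e1 : φ z1 (c b) = φ z' (c b) :=
              hκoff' (c b) fun h => hcbι (h.trans h1.symm)
            have e2 : φ z1 (c b) = φ (g (b + 1)) (c b) :=
              hz1off (c b) hcbι
            rw [← e1, e2]
          · have e1 : φ (g b) x = φ z' x := hκoff x fun hh => hx2 (hh.trans h2.symm)
            have e2 : φ (g b) x = φ (g (b + 1)) x := hcboff x hx2
            rw [← e1, e2]
      have hzb1 : z' = g (b + 1) := by
        rw [← hgf (g (b + 1)), ← hzeq, hz'def, hgf]
      have hdd := hdg i (b + 1) (le_refl i) (by omega) (by omega)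
      rw [← hzb1] at hdd
      omega
    rw [hκι] at hκ hκoff hκne
    have hκ'cb : κ' = c b := by
      rcases hcbκ with h | h
      · exact absurd (h.trans hκι) hcbι
      · exact h.symm
    rw [hκ'cb] at hκ' hκoff' hκne'
    have hφz' : φ z' = Function.update (φ (g b)) ι₀ α := by
      funext x
      by_cases hx : x = ι₀
      · rw [hx, Function.update_self]
        have e1 : φ z1 ι₀ = φ z' ι₀ := hκoff' ι₀ (Ne.symm hcbι)
        rw [← e1, hz1ι]
      · rw [Function.update_of_ne hx]
        exact (hκoff x hx).symm
    have hnadj1 : ¬ G.Adj (g (b + 1)) z' := by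
      intro hAdj
      have hm1 : ι₀ ∈ diffs (φ (g (b + 1))) (φ z') := by
        intro heq
        rw [hφz', Function.update_self] at heq
        exact hβb1 heq
      have hm2 : c b ∈ diffs (φ (g (b + 1))) (φ z') := by
        intro heq
        rw [hφz', Function.update_of_ne hcbι] at heq
        exact hcbne heq.symm
      exact not_hammingAdj_of_two (Ne.symm hcbι) hm1 hm2 (hfH _ _ hAdj)
    have hne3 : g (b + 1) ≠ z' := by
      intro hcon
      apply hβb1
      rw [hcon, hφz', Function.update_self]
    have hnadj2 : ¬ G.Adj z1 (g b) := by
      intro hAdj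
      have hm1 : ι₀ ∈ diffs (φ z1) (φ (g b)) := by
        rw [diffs_comm, hdbz1]; exact Or.inl rfl
      have hm2 : c b ∈ diffs (φ z1) (φ (g b)) := by
        rw [diffs_comm, hdbz1]; exact Or.inr rfl
      exact not_hammingAdj_of_two (Ne.symm hcbι) hm1 hm2 (hfH _ _ hAdj)
    have hne4 : z1 ≠ g b := by
      intro hcon
      apply hβb
      rw [← hcon, hz1ι]
    have hrel : QMEdgeRel G (s(g (b + 1), z1)) (s(g b, z')) :=
      ⟨(SimpleGraph.mem_edgeSet G).mpr hz1adj, (SimpleGraph.mem_edgeSet G).mpr haz',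
        Or.inr ⟨g (b + 1), z1, z', g b, rfl, rfl, hz1adj, hbz', haz'.symm,
          hadj b (by omega), hnadj1, hnadj2, hne3, hne4⟩⟩
    exact ⟨z', haz', Relation.EqvGen.trans _ _ _ hz1J (Relation.EqvGen.rel _ _ hrel), hφz'⟩
  -- downward induction
  have hInvAux : ∀ s b, b = j - s → i + 1 ≤ b →
      ∃ z, G.Adj (g b) z ∧ s(g b, z) ∈ J ∧
        φ z = Function.update (φ (g b)) ι₀ α := by
    intro s
    induction s with
    | zero =>
      intro b hb _
      rw [Nat.sub_zero] at hb
      subst hb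
      exact hbase
    | succ s ih =>
      intro b hb h1
      by_cases hbj : b = j
      · subst hbj; exact hbase
      · have hblt : b < j := by omega
        have hb1 : b + 1 = j - s := by omega
        exact hstep b h1 hblt (ih (b + 1) hb1 (by omega))
  have hP : ∀ b, i + 1 ≤ b → b ≤ j →
      ∃ z, G.Adj (g b) z ∧ s(g b, z) ∈ J ∧
        φ z = Function.update (φ (g b)) ι₀ α :=
    fun b h1 h2 => hInvAux (j - b) b (by omega) h1
  -- assemble the conclusion
  refine ⟨i, j, J, by omega, by omega, ?_, ?_, ?_, ?_, ?_, ?_⟩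
  · exact ⟨Ej, (SimpleGraph.mem_edgeSet G).mpr (hadj j (by omega)), hJ⟩
  · -- first edge in J
    obtain ⟨z, hzadj, hzJ, hzφ⟩ := hP (i + 1) (le_refl _) (by omega)
    obtain ⟨hcine, hcioff⟩ := of_diffs_singleton hci
    have hφz : φ z = φ (g i) := by
      funext κ
      by_cases hκ : κ = ι₀
      · rw [hzφ, hκ, Function.update_self, hα]
      · rw [hzφ, Function.update_of_ne hκ]
        exact (hcioff κ hκ).symm
    have hz : z = g i := by
      rw [← hgf z, ← hgf (g i), hφz]
    rw [hz] at hzJ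
    have hswap : s(g (i + 1), g i) = s(g i, g (i + 1)) := Sym2.eq_swap
    rw [hswap] at hzJ
    exact hzJ
  · -- last edge in J
    exact Relation.EqvGen.refl _
  · -- distance
    exact hdg (i + 1) j (by omega) (by omega) (le_refl j)
  · -- carrier
    intro k h1 h2
    obtain ⟨z, hzadj, hzJ, _⟩ := hP k h1 h2
    exact ⟨z, hzadj, hzJ⟩
  · -- no inner crossing
    intro k h1 h2 hmem
    have hmem' : Relation.EqvGen (QMEdgeRel G) Ej (s(g k, g (k + 1))) := hmem
    have hiff := eqvGen_iff
      (r := QMEdgeRel G)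
      (P := fun e => ∀ p q : V, e = s(p, q) → diffs (φ p) (φ q) = {ι₀})
      (fun a b hab => ⟨qmEdgeRel_coord hgf hfH hHg hab,
        qmEdgeRel_coord hgf hfH hHg (qmEdgeRel_symm hab)⟩) hmem'
    have hPEj : ∀ p q : V, Ej = s(p, q) → diffs (φ p) (φ q) = {ι₀} :=
      fun p q h => coordP_of_sym2_eq hcj1 h
    have hsing := (hiff.mp hPEj) (g k) (g (k + 1)) rfl
    rw [hc k (by omega)] at hsing
    have hckι : c k = ι₀ := by
      have : c k ∈ ({ι₀} : Set ι') := by rw [← hsing]; rfl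
      exact this
    exact hdistinct i k (le_refl i) (by omega) (by omega) (Or.inr (by omega))
      (by rw [← hι₀]; exact hckι.symm)
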